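/- For r ∈ [0,1] and a probability measure μ on a measurable space α, let Ber(r, μ) denote the probability measure (1−r)·δ_none + r·(μ.map some) on Option α. Let f₁ = Ber(r₁, μ₁) and f₂ = Ber(r₂, μ₂) with r₁ ∈ [0,1] and r₂ ∈ (0,1). Then D(f₁ ‖ f₂) = (1−r₁)·log((1−r₁)/(1−r₂)) + r₁·log(r₁/r₂) + r₁·D(μ₁ ‖ μ₂), where the terms 0·log 0 and 0·log(0/c) are interpreted as 0. (This decomposition of the Kullback–Leibler divergence between two Bernoulli random finite set distributions into a binary KL term plus the weighted divergence of the state densities is the general form behind Lemma 5 of the paper.) -/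

import Mathlib

open MeasureTheory ProbabilityTheory
open scoped ENNReal

/- Kullback–Leibler divergence (Mathlib's `klDiv` convention). -/
open scoped Classical in
noncomputable def klDiv {α : Type*} [MeasurableSpace α] (μ ν : Measure α) : EReal :=
  if μ ≪ ν ∧ Integrable (llr μ ν) μ then ((∫ x, llr μ ν x ∂μ : ℝ) : EReal) else ⊤

/-- The natural measurable space on `Option α`, transferred from `α ⊕ PUnit`. -/
instance {α : Type*} [MeasurableSpace α] : MeasurableSpace (Option α) :=
  MeasurableSpace.comap (Equiv.optionEquivSumPUnit.{0, _} α) inferInstance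

/-- Bernoulli random finite set distribution with existence probability `r` and state
density `μ`, modeled as a measure on `Option α` (`none` = empty set). -/
noncomputable def Ber {α : Type*} [MeasurableSpace α] (r : ℝ) (μ : Measure α) :
    Measure (Option α) :=
  ENNReal.ofReal (1 - r) • Measure.dirac (none : Option α) + ENNReal.ofReal r • μ.map some

section Aux

variable {α : Type*} [MeasurableSpace α]

noncomputable def optEquiv (α : Type*) [MeasurableSpace α] : Option α ≃ᵐ (α ⊕ PUnit) where
  toEquiv := Equiv.optionEquivSumPUnit α
  measurable_toFun := comap_measurable _
  measurable_invFun := by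
    intro s hs
    obtain ⟨t, ht, rfl⟩ := hs
    have : (Equiv.optionEquivSumPUnit α).symm ⁻¹' ((Equiv.optionEquivSumPUnit α) ⁻¹' t) = t := by
      ext x; simp
    rw [this]; exact ht

lemma measurableEmbedding_inl' {β : Type*} [MeasurableSpace β] :
    MeasurableEmbedding (Sum.inl : α → α ⊕ β) :=
  ⟨Sum.inl_injective, measurable_inl, fun _ hs => hs.inl_image⟩

lemma measurableEmbedding_some :
    MeasurableEmbedding (some : α → Option α) := by
  have h2 := (optEquiv α).symm.measurableEmbedding
  have : (some : α → Option α) = (optEquiv α).symm ∘ Sum.inl := by ext x; rfl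
  rw [this]; exact h2.comp measurableEmbedding_inl'

lemma measurableSet_none' : MeasurableSet {(none : Option α)} := by
  have : {(none : Option α)} = (optEquiv α) ⁻¹' (Set.range Sum.inr) := by
    ext x; cases x <;> simp [optEquiv, Equiv.optionEquivSumPUnit]
  rw [this]
  exact (optEquiv α).measurable measurableSet_range_inr

/-- The candidate density of `Ber r₁ μ₁` w.r.t. `Ber r₂ μ₂`. -/
noncomputable def berDensity (r₁ r₂ : ℝ) (μ₁ μ₂ : Measure α) : Option α → ℝ≥0∞ :=
  fun x => x.elim (ENNReal.ofReal (1 - r₁) / ENNReal.ofReal (1 - r₂))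
    (fun a => ENNReal.ofReal r₁ / ENNReal.ofReal r₂ * μ₁.rnDeriv μ₂ a)

lemma measurable_berDensity (r₁ r₂ : ℝ) (μ₁ μ₂ : Measure α) :
    Measurable (berDensity r₁ r₂ μ₁ μ₂) := by
  have h : berDensity r₁ r₂ μ₁ μ₂ =
      (Sum.elim (fun a => ENNReal.ofReal r₁ / ENNReal.ofReal r₂ * μ₁.rnDeriv μ₂ a)
        (fun _ => ENNReal.ofReal (1 - r₁) / ENNReal.ofReal (1 - r₂))) ∘ (optEquiv α) := by
    ext x; cases x <;> rfl
  rw [h]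
  exact (Measurable.sumElim (by fun_prop) measurable_const).comp (optEquiv α).measurable

lemma withDensity_map_some (μ : Measure α) (g : Option α → ℝ≥0∞) (hg : Measurable g) :
    (μ.map some).withDensity g = (μ.withDensity (g ∘ some)).map some := by
  ext s hs
  rw [withDensity_apply _ hs, measurableEmbedding_some.map_apply,
    withDensity_apply _ (measurableEmbedding_some.measurable hs),
    setLIntegral_map hs hg measurableEmbedding_some.measurable]
  rfl

lemma withDensity_dirac_none (g : Option α → ℝ≥0∞) (hg : Measurable g) :
    (Measure.dirac (none : Option α)).withDensity g = g none • Measure.dirac none := by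
  ext s hs
  classical
  rw [withDensity_apply _ hs, setLIntegral_dirac' hg hs, Measure.smul_apply,
    Measure.dirac_apply' _ hs, smul_eq_mul]
  by_cases h : (none : Option α) ∈ s <;> simp [h]

instance isFiniteMeasure_Ber (r : ℝ) (μ : Measure α) [IsProbabilityMeasure μ] :
    IsFiniteMeasure (Ber r μ) := by
  constructor
  rw [Ber]
  simp only [Measure.add_apply, Measure.smul_apply, smul_eq_mul]
  have h1 : (Measure.dirac (none : Option α)) Set.univ = 1 := by simp
  have h2 : (μ.map some) Set.univ = 1 := by
    rw [measurableEmbedding_some.map_apply]; simp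
  rw [h1, h2, mul_one, mul_one]
  exact ENNReal.add_lt_top.mpr ⟨ENNReal.ofReal_lt_top, ENNReal.ofReal_lt_top⟩

variable {r₁ r₂ : ℝ} {μ₁ μ₂ : Measure α}

lemma Ber_withDensity (hr₁ : r₁ ∈ Set.Icc (0:ℝ) 1) (hr₂ : r₂ ∈ Set.Ioo (0:ℝ) 1)
    [IsProbabilityMeasure μ₁] [IsProbabilityMeasure μ₂]
    (h : μ₁ ≪ μ₂ ∨ r₁ = 0) :
    (Ber r₂ μ₂).withDensity (berDensity r₁ r₂ μ₁ μ₂) = Ber r₁ μ₁ := by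
  have hg := measurable_berDensity r₁ r₂ μ₁ μ₂
  have hc₂ : ENNReal.ofReal (1 - r₂) ≠ 0 := by
    simp [ENNReal.ofReal_eq_zero]; linarith [hr₂.2]
  have hd₂ : ENNReal.ofReal r₂ ≠ 0 := by
    simp [ENNReal.ofReal_eq_zero]; linarith [hr₂.1]
  rw [Ber, withDensity_add_measure, withDensity_smul_measure, withDensity_smul_measure,
    withDensity_dirac_none _ hg, withDensity_map_some _ _ hg]
  have h1 : ENNReal.ofReal (1 - r₂) • (berDensity r₁ r₂ μ₁ μ₂ none • Measure.dirac none)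
      = ENNReal.ofReal (1 - r₁) • (Measure.dirac (none : Option α)) := by
    rw [smul_smul, berDensity]
    simp only [Option.elim]
    rw [ENNReal.mul_div_cancel hc₂ ENNReal.ofReal_ne_top]
  have h2 : μ₂.withDensity ((berDensity r₁ r₂ μ₁ μ₂) ∘ some)
      = (ENNReal.ofReal r₁ / ENNReal.ofReal r₂) • μ₂.withDensity (μ₁.rnDeriv μ₂) := by
    rw [← withDensity_smul _ (Measure.measurable_rnDeriv μ₁ μ₂)]
    rfl
  rw [h1, h2, Ber]
  congr 1
  rcases h with h | h
  · rw [Measure.withDensity_rnDeriv_eq μ₁ μ₂ h, Measure.map_smul, smul_smul,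
      ENNReal.mul_div_cancel hd₂ ENNReal.ofReal_ne_top]
  · subst h
    simp [ENNReal.ofReal_zero, ENNReal.zero_div]

lemma absCont_Ber (hr₁ : r₁ ∈ Set.Icc (0:ℝ) 1) (hr₂ : r₂ ∈ Set.Ioo (0:ℝ) 1)
    [IsProbabilityMeasure μ₁] [IsProbabilityMeasure μ₂]
    (h : μ₁ ≪ μ₂ ∨ r₁ = 0) : Ber r₁ μ₁ ≪ Ber r₂ μ₂ := by
  rw [← Ber_withDensity hr₁ hr₂ h]
  exact withDensity_absolutelyContinuous _ _

lemma rnDeriv_Ber_ae (hr₁ : r₁ ∈ Set.Icc (0:ℝ) 1) (hr₂ : r₂ ∈ Set.Ioo (0:ℝ) 1)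
    [IsProbabilityMeasure μ₁] [IsProbabilityMeasure μ₂]
    (h : μ₁ ≪ μ₂ ∨ r₁ = 0) :
    (Ber r₁ μ₁).rnDeriv (Ber r₂ μ₂) =ᵐ[Ber r₂ μ₂] berDensity r₁ r₂ μ₁ μ₂ := by
  conv_lhs => rw [← Ber_withDensity hr₁ hr₂ h]
  exact Measure.rnDeriv_withDensity _ (measurable_berDensity _ _ _ _)

lemma dirac_absCont_Ber (hr₂ : r₂ ∈ Set.Ioo (0:ℝ) 1) [IsProbabilityMeasure μ₂] :
    Measure.dirac (none : Option α) ≪ Ber r₂ μ₂ := by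
  intro s hs
  have hc₂ : ENNReal.ofReal (1 - r₂) ≠ 0 := by
    simp [ENNReal.ofReal_eq_zero]; linarith [hr₂.2]
  have hle : (ENNReal.ofReal (1 - r₂)) • Measure.dirac (none : Option α) ≤ Ber r₂ μ₂ :=
    Measure.le_add_right le_rfl
  have h0 : (ENNReal.ofReal (1 - r₂)) * Measure.dirac (none : Option α) s = 0 :=
    le_antisymm (hs ▸ hle s) zero_le
  exact (mul_eq_zero.mp h0).resolve_left hc₂

lemma map_absCont_Ber (hr₂ : r₂ ∈ Set.Ioo (0:ℝ) 1) [IsProbabilityMeasure μ₂] :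
    μ₂.map some ≪ Ber r₂ μ₂ := by
  intro s hs
  have hd₂ : ENNReal.ofReal r₂ ≠ 0 := by
    simp [ENNReal.ofReal_eq_zero]; linarith [hr₂.1]
  have hle : (ENNReal.ofReal r₂) • μ₂.map some ≤ Ber r₂ μ₂ :=
    Measure.le_add_left le_rfl
  have h0 : (ENNReal.ofReal r₂) * (μ₂.map some) s = 0 :=
    le_antisymm (hs ▸ hle s) zero_le
  exact (mul_eq_zero.mp h0).resolve_left hd₂

lemma rnDeriv_Ber_none (hr₁ : r₁ ∈ Set.Icc (0:ℝ) 1) (hr₂ : r₂ ∈ Set.Ioo (0:ℝ) 1)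
    [IsProbabilityMeasure μ₁] [IsProbabilityMeasure μ₂]
    (h : μ₁ ≪ μ₂ ∨ r₁ = 0) :
    (Ber r₁ μ₁).rnDeriv (Ber r₂ μ₂) none
      = ENNReal.ofReal (1 - r₁) / ENNReal.ofReal (1 - r₂) := by
  have hae : (Ber r₁ μ₁).rnDeriv (Ber r₂ μ₂) =ᵐ[Measure.dirac none] berDensity r₁ r₂ μ₁ μ₂ :=
    (dirac_absCont_Ber hr₂).ae_le (rnDeriv_Ber_ae hr₁ hr₂ h)
  have h0 := ae_iff.mp hae
  obtain ⟨t, hst, htm, ht0⟩ := exists_measurable_superset_of_null h0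
  rw [Measure.dirac_apply' _ htm] at ht0
  have hnone : (none : Option α) ∉ t := by
    by_contra hc
    rw [Set.indicator_of_mem hc] at ht0
    simp at ht0
  have : (none : Option α) ∉ {x | ¬ (Ber r₁ μ₁).rnDeriv (Ber r₂ μ₂) x = berDensity r₁ r₂ μ₁ μ₂ x} :=
    fun hx => hnone (hst hx)
  simpa [berDensity] using not_not.mp this

lemma rnDeriv_Ber_some (hr₁ : r₁ ∈ Set.Icc (0:ℝ) 1) (hr₂ : r₂ ∈ Set.Ioo (0:ℝ) 1)
    [IsProbabilityMeasure μ₁] [IsProbabilityMeasure μ₂]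
    (h : μ₁ ≪ μ₂ ∨ r₁ = 0) :
    (fun a => (Ber r₁ μ₁).rnDeriv (Ber r₂ μ₂) (some a))
      =ᵐ[μ₂] fun a => ENNReal.ofReal r₁ / ENNReal.ofReal r₂ * μ₁.rnDeriv μ₂ a := by
  have hae : (Ber r₁ μ₁).rnDeriv (Ber r₂ μ₂) =ᵐ[μ₂.map some] berDensity r₁ r₂ μ₁ μ₂ :=
    (map_absCont_Ber hr₂).ae_le (rnDeriv_Ber_ae hr₁ hr₂ h)
  rw [Filter.EventuallyEq, measurableEmbedding_some.ae_map_iff] at hae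
  exact hae

end Aux

section LLR

variable {α : Type*} [MeasurableSpace α] {r₁ r₂ : ℝ} {μ₁ μ₂ : Measure α}

lemma llr_Ber_none (hr₁ : r₁ ∈ Set.Icc (0:ℝ) 1) (hr₂ : r₂ ∈ Set.Ioo (0:ℝ) 1)
    [IsProbabilityMeasure μ₁] [IsProbabilityMeasure μ₂]
    (h : μ₁ ≪ μ₂ ∨ r₁ = 0) :
    llr (Ber r₁ μ₁) (Ber r₂ μ₂) none = Real.log ((1 - r₁) / (1 - r₂)) := by
  rw [llr, rnDeriv_Ber_none hr₁ hr₂ h, ENNReal.toReal_div,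
    ENNReal.toReal_ofReal (by linarith [hr₁.2]), ENNReal.toReal_ofReal (by linarith [hr₂.2])]

lemma llr_Ber_some (hr₁ : r₁ ∈ Set.Icc (0:ℝ) 1) (hr₂ : r₂ ∈ Set.Ioo (0:ℝ) 1)
    [IsProbabilityMeasure μ₁] [IsProbabilityMeasure μ₂]
    (h : μ₁ ≪ μ₂) (hr₁pos : 0 < r₁) :
    (fun a => llr (Ber r₁ μ₁) (Ber r₂ μ₂) (some a))
      =ᵐ[μ₁] fun a => Real.log (r₁ / r₂) + llr μ₁ μ₂ a := by
  filter_upwards [h.ae_le (rnDeriv_Ber_some hr₁ hr₂ (Or.inl h)),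
    Measure.rnDeriv_pos h, h.ae_le (Measure.rnDeriv_lt_top μ₁ μ₂)] with a h1 h2 h3
  rw [llr, h1, ENNReal.toReal_mul, ENNReal.toReal_div,
    ENNReal.toReal_ofReal hr₁.1, ENNReal.toReal_ofReal (le_of_lt hr₂.1),
    Real.log_mul (div_ne_zero hr₁pos.ne' hr₂.1.ne')
      (ENNReal.toReal_ne_zero.mpr ⟨h2.ne', h3.ne⟩)]
  rfl

lemma integrable_dirac_none {f : Option α → ℝ} (hf : StronglyMeasurable f) :
    Integrable f (Measure.dirac (none : Option α)) := by
  refine ⟨hf.aestronglyMeasurable, ?_⟩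
  rw [HasFiniteIntegral, lintegral_dirac' _ hf.measurable.enorm]
  exact enorm_lt_top

lemma integrable_llr_Ber_iff (hr₁ : r₁ ∈ Set.Icc (0:ℝ) 1) (hr₂ : r₂ ∈ Set.Ioo (0:ℝ) 1)
    [IsProbabilityMeasure μ₁] [IsProbabilityMeasure μ₂]
    (h : μ₁ ≪ μ₂) (hr₁pos : 0 < r₁) :
    Integrable (llr (Ber r₁ μ₁) (Ber r₂ μ₂)) (Ber r₁ μ₁)
      ↔ Integrable (llr μ₁ μ₂) μ₁ := by
  set f := llr (Ber r₁ μ₁) (Ber r₂ μ₂) with hfdef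
  rw [Ber, integrable_add_measure]
  have hA : Integrable (llr (Ber r₁ μ₁) (Ber r₂ μ₂))
      (ENNReal.ofReal (1 - r₁) • Measure.dirac (none : Option α)) :=
    (integrable_dirac_none (stronglyMeasurable_llr _ _)).smul_measure ENNReal.ofReal_ne_top
  have hd₁ : ENNReal.ofReal r₁ ≠ 0 := by
    simp [ENNReal.ofReal_eq_zero]; linarith
  rw [and_iff_right hA, integrable_smul_measure hd₁ ENNReal.ofReal_ne_top,
    integrable_map_measure (stronglyMeasurable_llr _ _).aestronglyMeasurable
      measurableEmbedding_some.measurable.aemeasurable]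
  have hco : Integrable (llr (Ber r₁ μ₁) (Ber r₂ μ₂) ∘ some) μ₁
      ↔ Integrable (fun a => Real.log (r₁ / r₂) + llr μ₁ μ₂ a) μ₁ :=
    integrable_congr (llr_Ber_some hr₁ hr₂ h hr₁pos)
  rw [hco]
  constructor
  · intro hI
    have h2 := hI.sub (integrable_const (Real.log (r₁ / r₂)))
    have : ((fun a => Real.log (r₁ / r₂) + llr μ₁ μ₂ a) - fun _ => Real.log (r₁ / r₂))
        = llr μ₁ μ₂ := by ext a; simp
    rwa [this] at h2
  · intro hI
    exact (integrable_const _).add hI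

lemma integral_llr_Ber (hr₁ : r₁ ∈ Set.Icc (0:ℝ) 1) (hr₂ : r₂ ∈ Set.Ioo (0:ℝ) 1)
    [IsProbabilityMeasure μ₁] [IsProbabilityMeasure μ₂]
    (h : μ₁ ≪ μ₂) (hr₁pos : 0 < r₁) (hI : Integrable (llr μ₁ μ₂) μ₁) :
    ∫ x, llr (Ber r₁ μ₁) (Ber r₂ μ₂) x ∂(Ber r₁ μ₁)
      = (1 - r₁) * Real.log ((1 - r₁) / (1 - r₂)) + r₁ * Real.log (r₁ / r₂)
        + r₁ * ∫ a, llr μ₁ μ₂ a ∂μ₁ := by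
  set f := llr (Ber r₁ μ₁) (Ber r₂ μ₂) with hfdef
  have hst := stronglyMeasurable_llr (Ber r₁ μ₁) (Ber r₂ μ₂)
  have hA : Integrable (llr (Ber r₁ μ₁) (Ber r₂ μ₂))
      (ENNReal.ofReal (1 - r₁) • Measure.dirac (none : Option α)) :=
    (integrable_dirac_none hst).smul_measure ENNReal.ofReal_ne_top
  have hd₁ : ENNReal.ofReal r₁ ≠ 0 := by
    simp [ENNReal.ofReal_eq_zero]; linarith
  have hImap : Integrable (fun a => llr (Ber r₁ μ₁) (Ber r₂ μ₂) (some a)) μ₁ := by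
    rw [integrable_congr (llr_Ber_some hr₁ hr₂ h hr₁pos)]
    exact (integrable_const _).add hI
  have hB : Integrable (llr (Ber r₁ μ₁) (Ber r₂ μ₂)) (ENNReal.ofReal r₁ • μ₁.map some) := by
    rw [integrable_smul_measure hd₁ ENNReal.ofReal_ne_top,
      integrable_map_measure hst.aestronglyMeasurable
        measurableEmbedding_some.measurable.aemeasurable]
    exact hImap
  rw [Ber, integral_add_measure hA hB, integral_smul_measure, integral_smul_measure,
    integral_dirac' _ _ hst,
    integral_map measurableEmbedding_some.measurable.aemeasurable hst.aestronglyMeasurable]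
  rw [integral_congr_ae (llr_Ber_some hr₁ hr₂ h hr₁pos),
    integral_add (integrable_const _) hI, integral_const]
  simp only [measure_univ, probReal_univ, ENNReal.toReal_one, one_smul, smul_eq_mul,
    ENNReal.toReal_ofReal (by linarith [hr₁.2] : (0:ℝ) ≤ 1 - r₁),
    ENNReal.toReal_ofReal hr₁.1, llr_Ber_none hr₁ hr₂ (Or.inl h)]
  ring

end LLR


/-- KL divergence between two Bernoulli RFS distributions: binary KL term plus the
existence-probability-weighted KL divergence of the state densities. -/
theorem klDiv_Ber_eq {α : Type*} [MeasurableSpace α]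
    (r₁ r₂ : ℝ) (hr₁ : r₁ ∈ Set.Icc (0 : ℝ) 1) (hr₂ : r₂ ∈ Set.Ioo (0 : ℝ) 1)
    (μ₁ μ₂ : Measure α) [IsProbabilityMeasure μ₁] [IsProbabilityMeasure μ₂] :
    klDiv (Ber r₁ μ₁) (Ber r₂ μ₂)
      = (((1 - r₁) * Real.log ((1 - r₁) / (1 - r₂)) + r₁ * Real.log (r₁ / r₂) : ℝ) : EReal)
        + (r₁ : EReal) * klDiv μ₁ μ₂ := by
  by_cases h0 : r₁ = 0
  · subst h0
    have hB0 : Ber (0:ℝ) μ₁ = Measure.dirac (none : Option α) := by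
      rw [Ber]; simp
    have hAC := absCont_Ber hr₁ hr₂ (Or.inr rfl) (μ₁ := μ₁) (μ₂ := μ₂)
    have hInt : Integrable (llr (Ber 0 μ₁) (Ber r₂ μ₂)) (Ber 0 μ₁) := by
      rw [hB0]; exact integrable_dirac_none (stronglyMeasurable_llr _ _)
    rw [klDiv, if_pos ⟨hAC, hInt⟩]
    have hIntegral : ∫ x, llr (Ber 0 μ₁) (Ber r₂ μ₂) x ∂(Ber 0 μ₁)
        = Real.log ((1 - 0) / (1 - r₂)) := by
      set f := llr (Ber 0 μ₁) (Ber r₂ μ₂) with hfdef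
      rw [hB0, integral_dirac' _ _ (stronglyMeasurable_llr _ _),
        llr_Ber_none hr₁ hr₂ (Or.inr rfl)]
    rw [hIntegral]
    have hz : ((0:ℝ) : EReal) = 0 := rfl
    rw [hz, zero_mul, add_zero]
    norm_num
  · have hr₁pos : 0 < r₁ := lt_of_le_of_ne hr₁.1 (Ne.symm h0)
    by_cases hgood : μ₁ ≪ μ₂ ∧ Integrable (llr μ₁ μ₂) μ₁
    · obtain ⟨hac, hint⟩ := hgood
      rw [klDiv, klDiv,
        if_pos ⟨absCont_Ber hr₁ hr₂ (Or.inl hac),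
          (integrable_llr_Ber_iff hr₁ hr₂ hac hr₁pos).mpr hint⟩,
        if_pos ⟨hac, hint⟩,
        integral_llr_Ber hr₁ hr₂ hac hr₁pos hint,
        ← EReal.coe_mul, ← EReal.coe_add]
    · rw [klDiv, klDiv, if_neg hgood]
      have hne : ¬ (Ber r₁ μ₁ ≪ Ber r₂ μ₂
          ∧ Integrable (llr (Ber r₁ μ₁) (Ber r₂ μ₂)) (Ber r₁ μ₁)) := by
        rintro ⟨hAC, hInt⟩
        by_cases hac : μ₁ ≪ μ₂
        · exact hgood ⟨hac, (integrable_llr_Ber_iff hr₁ hr₂ hac hr₁pos).mp hInt⟩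
        · apply hac
          refine Measure.AbsolutelyContinuous.mk (fun s hs hs0 => ?_)
          have ht : MeasurableSet (some '' s) :=
            measurableEmbedding_some.measurableSet_image.mpr hs
          have h2 : (Ber r₂ μ₂) (some '' s) = 0 := by
            rw [Ber, Measure.add_apply, Measure.smul_apply, Measure.smul_apply,
              Measure.dirac_apply' _ ht, measurableEmbedding_some.map_apply,
              Set.preimage_image_eq s (Option.some_injective α), hs0]
            simp
          have h1 := hAC h2
          rw [Ber, Measure.add_apply, Measure.smul_apply, Measure.smul_apply,
            Measure.dirac_apply' _ ht, measurableEmbedding_some.map_apply,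
            Set.preimage_image_eq s (Option.some_injective α)] at h1
          have hd₁ : ENNReal.ofReal r₁ ≠ 0 := by
            simp [ENNReal.ofReal_eq_zero]; linarith
          have h3 := (add_eq_zero.mp h1).2
          rw [smul_eq_mul] at h3
          exact (mul_eq_zero.mp h3).resolve_left hd₁
      rw [if_neg hne, EReal.coe_mul_top_of_pos hr₁pos,
        EReal.add_top_of_ne_bot (EReal.coe_ne_bot _)]
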